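/- Let X be a T1 regular space. The following are equivalent: (1) the hyperspace K(X) of nonempty compact subsets with the Vietoris topology is a D_1-space; (2) F_n(X) with the Vietoris topology is a D_1-space for some n ≥ 2; (3) X is discrete or X is compact and metrizable. -/

import Mathlib

open Set TopologicalSpace

universe u v

/-- The Fell topology on the collection of all subsets of `X`, generated by the subbase
consisting of the sets `U⁻ = {H | H ∩ U ≠ ∅}` for `U` open and
`(Kᶜ)⁺ = {H | H ⊆ Kᶜ}` for `K` compact. -/
def fellTopology (X : Type u) [TopologicalSpace X] : TopologicalSpace (Set X) :=
  TopologicalSpace.generateFrom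
    ({S | ∃ U : Set X, IsOpen U ∧ S = {H : Set X | (H ∩ U).Nonempty}} ∪
     {S | ∃ K : Set X, IsCompact K ∧ S = {H : Set X | H ⊆ Kᶜ}})

/-- The Vietoris topology on the collection of all subsets of `X`, generated by the subbase
consisting of the sets `U⁺ = {H | H ⊆ U}` and `U⁻ = {H | H ∩ U ≠ ∅}` for `U` open. -/
def vietorisTopology (X : Type u) [TopologicalSpace X] : TopologicalSpace (Set X) :=
  TopologicalSpace.generateFrom
    ({S | ∃ U : Set X, IsOpen U ∧ S = {H : Set X | H ⊆ U}} ∪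
     {S | ∃ U : Set X, IsOpen U ∧ S = {H : Set X | (H ∩ U).Nonempty}})

/-- A collection `S` of subsets of `X`, viewed as a hyperspace with the Fell topology. -/
def FellHyper (X : Type u) [TopologicalSpace X] (S : Set (Set X)) : Type u :=
  {A : Set X // A ∈ S}

/-- A collection `S` of subsets of `X`, viewed as a hyperspace with the Vietoris topology. -/
def VietorisHyper (X : Type u) [TopologicalSpace X] (S : Set (Set X)) : Type u :=
  {A : Set X // A ∈ S}

instance FellHyper.instTopologicalSpace (X : Type u) [TopologicalSpace X] (S : Set (Set X)) :
    TopologicalSpace (FellHyper X S) :=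
  TopologicalSpace.induced (Subtype.val : {A : Set X // A ∈ S} → Set X) (fellTopology X)

instance VietorisHyper.instTopologicalSpace (X : Type u) [TopologicalSpace X] (S : Set (Set X)) :
    TopologicalSpace (VietorisHyper X S) :=
  TopologicalSpace.induced (Subtype.val : {A : Set X // A ∈ S} → Set X) (vietorisTopology X)

/-- The underlying subset of `X` of a point of a Fell hyperspace. -/
def FellHyper.carrier {X : Type u} [TopologicalSpace X] {S : Set (Set X)}
    (A : FellHyper X S) : Set X :=
  Subtype.val A

/-- The underlying subset of `X` of a point of a Vietoris hyperspace. -/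
def VietorisHyper.carrier {X : Type u} [TopologicalSpace X] {S : Set (Set X)}
    (A : VietorisHyper X S) : Set X :=
  Subtype.val A

/-- `CL(X)`: the nonempty closed subsets of `X`. -/
def CL (X : Type u) [TopologicalSpace X] : Set (Set X) := {A | A.Nonempty ∧ IsClosed A}

/-- `𝒦(X)`: the nonempty compact subsets of `X`. -/
def Kcal (X : Type u) [TopologicalSpace X] : Set (Set X) := {A | A.Nonempty ∧ IsCompact A}

/-- `ℱ(X)`: the nonempty finite subsets of `X`. -/
def Fcal (X : Type u) : Set (Set X) := {A | A.Nonempty ∧ A.Finite}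

/-- `ℱₙ(X)`: the nonempty subsets of `X` with at most `n` points. -/
def Fn (X : Type u) (n : ℕ) : Set (Set X) := {A | A.Nonempty ∧ A.encard ≤ n}

/-- A space is a `D₁`-space if every nonempty closed subset has a countable
neighborhood base. -/
def IsD1Space (Y : Type v) [TopologicalSpace Y] : Prop :=
  ∀ F : Set Y, F.Nonempty → IsClosed F →
    ∃ B : ℕ → Set Y, (∀ n, IsOpen (B n) ∧ F ⊆ B n) ∧
      ∀ V : Set Y, IsOpen V → F ⊆ V → ∃ n, B n ⊆ V

/-- A space is a `D₀`-space if every nonempty compact subset has a countable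
neighborhood base. -/
def IsD0Space (Y : Type v) [TopologicalSpace Y] : Prop :=
  ∀ F : Set Y, F.Nonempty → IsCompact F →
    ∃ B : ℕ → Set Y, (∀ n, IsOpen (B n) ∧ F ⊆ B n) ∧
      ∀ V : Set Y, IsOpen V → F ⊆ V → ∃ n, B n ⊆ V

/-- A space has a `G_δ`-diagonal if the diagonal is a `G_δ`-set in `X × X`. -/
def HasGdeltaDiagonal (X : Type u) [TopologicalSpace X] : Prop :=
  ∃ U : ℕ → Set (X × X), (∀ n, IsOpen (U n)) ∧ (⋂ n, U n) = {p : X × X | p.1 = p.2}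

/-- A space is perfect if every closed subset is a `G_δ`-set. -/
def IsPerfectSpace (Y : Type v) [TopologicalSpace Y] : Prop :=
  ∀ F : Set Y, IsClosed F → ∃ U : ℕ → Set Y, (∀ n, IsOpen (U n)) ∧ F = ⋂ n, U n

/-- A space has the compact-`G_δ` property if every compact subset is a `G_δ`-set. -/
def CompactGDeltaProperty (Y : Type v) [TopologicalSpace Y] : Prop :=
  ∀ K : Set Y, IsCompact K → ∃ U : ℕ → Set Y, (∀ n, IsOpen (U n)) ∧ K = ⋂ n, U n

/-- `γ`-space. -/
def IsGammaSpace (Y : Type v) [TopologicalSpace Y] : Prop :=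
  ∃ g : ℕ → Y → Set Y,
    (∀ n y, IsOpen (g n y) ∧ y ∈ g n y) ∧
    (∀ y, ∀ V : Set Y, IsOpen V → y ∈ V → ∃ n, g n y ⊆ V) ∧
    (∀ n y, ∃ m, ∀ z ∈ g m y, g m z ⊆ g n y)

/-- A space has a `G_δ*`-diagonal if there is a sequence `𝒰 n` of open covers such that
`{x} = ⋂ n, closure (st(x, 𝒰 n))` for every `x`. -/
def HasGdeltaStarDiagonal (X : Type u) [TopologicalSpace X] : Prop :=
  ∃ 𝒰 : ℕ → Set (Set X),
    (∀ n, ∀ U ∈ 𝒰 n, IsOpen U) ∧ (∀ n, ⋃₀ 𝒰 n = univ) ∧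
    ∀ x : X, (⋂ n, closure (⋃₀ {U ∈ 𝒰 n | x ∈ U})) = {x}




open Filter Metric

set_option linter.unusedSectionVars false
set_option linter.unusedVariables false
set_option maxHeartbeats 1000000

section Basics
variable {X : Type u} [TopologicalSpace X] {S : Set (Set X)}

def vSub (X : Type u) [TopologicalSpace X] : Set (Set (Set X)) :=
  {S | ∃ U : Set X, IsOpen U ∧ S = {H : Set X | H ⊆ U}} ∪
  {S | ∃ U : Set X, IsOpen U ∧ S = {H : Set X | (H ∩ U).Nonempty}}

lemma vietoris_eq (X : Type u) [TopologicalSpace X] :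
    vietorisTopology X = TopologicalSpace.generateFrom (vSub X) := rfl

lemma isOpen_hyper_iff {s : Set (VietorisHyper X S)} :
    IsOpen s ↔ ∃ t, (vietorisTopology X).IsOpen t ∧ Subtype.val ⁻¹' t = s :=
  Iff.rfl

lemma isOpen_hyperPlus {U : Set X} (hU : IsOpen U) :
    IsOpen {A : VietorisHyper X S | A.1 ⊆ U} := by
  refine isOpen_hyper_iff.2 ⟨{H | H ⊆ U}, ?_, rfl⟩
  exact TopologicalSpace.GenerateOpen.basic _ (Or.inl ⟨U, hU, rfl⟩)

lemma isOpen_hyperMinus {U : Set X} (hU : IsOpen U) :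
    IsOpen {A : VietorisHyper X S | (A.1 ∩ U).Nonempty} := by
  refine isOpen_hyper_iff.2 ⟨{H | (H ∩ U).Nonempty}, ?_, rfl⟩
  exact TopologicalSpace.GenerateOpen.basic _ (Or.inr ⟨U, hU, rfl⟩)

/-- Key extraction lemma: a hyperspace-open neighborhood of a set `{p, q}` contains a
"box" of pairs. -/
lemma pair_nbhd {B : Set (VietorisHyper X S)} (hB : IsOpen B)
    {A : VietorisHyper X S} (hA : A ∈ B) {p q : X} (hval : A.1 = {p, q}) :
    ∃ P O : Set X, IsOpen P ∧ IsOpen O ∧ p ∈ P ∧ q ∈ O ∧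
      ∀ y z : X, y ∈ P → z ∈ O → ∀ (h : ({y, z} : Set X) ∈ S),
        (⟨{y, z}, h⟩ : VietorisHyper X S) ∈ B := by
  obtain ⟨t, ht, rfl⟩ := isOpen_hyper_iff.1 hB
  have hbasis := @TopologicalSpace.isTopologicalBasis_of_subbasis (Set X) (vietorisTopology X)
    (vSub X) (vietoris_eq X)
  have hmem : A.1 ∈ t := hA
  obtain ⟨v, ⟨f, ⟨hf_fin, hf_sub⟩, rfl⟩, hAv, hvt⟩ :=
    @TopologicalSpace.IsTopologicalBasis.exists_subset_of_mem_open (Set X) (vietorisTopology X)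
      _ hbasis A.1 t hmem ht
  have hw : ∀ s ∈ f, ∃ U : Set X, IsOpen U ∧
      (s = {H : Set X | H ⊆ U} ∨ s = {H : Set X | (H ∩ U).Nonempty}) := by
    intro s hs
    rcases hf_sub hs with ⟨U, hU, rfl⟩ | ⟨U, hU, rfl⟩
    exacts [⟨U, hU, Or.inl rfl⟩, ⟨U, hU, Or.inr rfl⟩]
  choose! U hUopen hUform using hw
  have hApair : ({p, q} : Set X) ∈ ⋂₀ f := hval ▸ hAv
  refine ⟨⋂ s ∈ {s ∈ f | p ∈ U s}, U s, ⋂ s ∈ {s ∈ f | q ∈ U s}, U s, ?_, ?_, ?_, ?_, ?_⟩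
  · exact Set.Finite.isOpen_biInter (hf_fin.subset (sep_subset _ _))
      (fun s hs => hUopen s hs.1)
  · exact Set.Finite.isOpen_biInter (hf_fin.subset (sep_subset _ _))
      (fun s hs => hUopen s hs.1)
  · exact mem_iInter₂.2 fun s hs => hs.2
  · exact mem_iInter₂.2 fun s hs => hs.2
  · intro y z hy hz h
    have hyz : ({y, z} : Set X) ∈ ⋂₀ f := by
      intro s hs
      have hAs : ({p, q} : Set X) ∈ s := hApair s hs
      rcases hUform s hs with hform | hform
      · rw [hform] at hAs ⊢
        have hp : p ∈ U s := hAs (by simp)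
        have hq : q ∈ U s := hAs (by simp)
        have hyU : y ∈ U s := mem_iInter₂.1 hy s ⟨hs, hp⟩
        have hzU : z ∈ U s := mem_iInter₂.1 hz s ⟨hs, hq⟩
        intro w hw
        rcases hw with rfl | rfl
        exacts [hyU, hzU]
      · rw [hform] at hAs ⊢
        obtain ⟨w, hw1, hw2⟩ := hAs
        rcases hw1 with rfl | rfl
        · exact ⟨y, by simp, mem_iInter₂.1 hy s ⟨hs, hw2⟩⟩
        · exact ⟨z, by simp, mem_iInter₂.1 hz s ⟨hs, hw2⟩⟩
    exact hvt hyz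

lemma pair_mem_Fn {n : ℕ} (hn : 2 ≤ n) (y z : X) : ({y, z} : Set X) ∈ Fn X n := by
  refine ⟨⟨y, by simp⟩, ?_⟩
  calc ({y, z} : Set X).encard ≤ ({z} : Set X).encard + 1 := Set.encard_insert_le _ _
  _ = 2 := by simp [Set.encard_singleton]; rfl
  _ ≤ (n : ℕ∞) := by exact_mod_cast hn

end Basics

section C
variable {X : Type u} [TopologicalSpace X] [T1Space X]

lemma no_escaping_discrete {n : ℕ} (hn : 2 ≤ n)
    (hD1 : IsD1Space (VietorisHyper X (Fn X n)))
    {p : X} (hp : ∀ U : Set X, IsOpen U → p ∈ U → ∃ y, y ∈ U ∧ y ≠ p)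
    {D : Set X} (hDc : IsClosed D) (hpD : p ∉ D)
    (hdisc : ∀ x ∈ D, ∃ V : Set X, IsOpen V ∧ x ∈ V ∧ V ∩ D = {x})
    (d : ℕ → X) (hdinj : Function.Injective d) (hd : ∀ k, d k ∈ D) : False := by
  classical
  set F : Set (VietorisHyper X (Fn X n)) := {A | p ∈ A.1} with hF
  have hFne : F.Nonempty := ⟨⟨{p, p}, pair_mem_Fn hn p p⟩, show p ∈ ({p, p} : Set X) by simp⟩
  have hFcl : IsClosed F := by
    have : IsOpen {A : VietorisHyper X (Fn X n) | A.1 ⊆ {p}ᶜ} :=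
      isOpen_hyperPlus isClosed_singleton.isOpen_compl
    convert this.isClosed_compl using 1
    ext A
    simp [hF, Set.subset_compl_singleton_iff]
  obtain ⟨B, hB1, hB2⟩ := hD1 F hFne hFcl
  have key : ∀ k, ∃ y : X, y ≠ p ∧ y ∉ D ∧
      (⟨{y, d k}, pair_mem_Fn hn y (d k)⟩ : VietorisHyper X (Fn X n)) ∈ B k := by
    intro k
    have hmem : (⟨{p, d k}, pair_mem_Fn hn p (d k)⟩ : VietorisHyper X (Fn X n)) ∈ B k :=
      (hB1 k).2 (show p ∈ ({p, d k} : Set X) by simp)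
    obtain ⟨P, O, hPo, hOo, hpP, hdO, hPO⟩ := pair_nbhd (hB1 k).1 hmem rfl
    obtain ⟨y, hy, hyp⟩ := hp (P ∩ Dᶜ) (hPo.inter hDc.isOpen_compl) ⟨hpP, hpD⟩
    exact ⟨y, hyp, hy.2, hPO y (d k) hy.1 hdO _⟩
  choose y hy1 hy2 hy3 using key
  set A : ℕ → VietorisHyper X (Fn X n) := fun k => ⟨{y k, d k}, pair_mem_Fn hn _ _⟩ with hA
  have hclos : ∀ HH ∈ F, HH ∉ closure (Set.range A) := by
    intro HH hHH
    have hHfin : HH.1.Finite := Set.finite_of_encard_le_coe HH.2.2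
    set J : Set ℕ := d ⁻¹' HH.1 with hJ
    have hJfin : J.Finite := Set.Finite.preimage hdinj.injOn hHfin
    set Bad : Set X := ⋃ k ∈ J, ({y k, d k} : Set X) with hBad
    have hBadfin : Bad.Finite := hJfin.biUnion (fun k _ => (Set.finite_singleton _).insert _)
    have hpBad : p ∉ Bad := by
      intro hmem
      simp only [hBad, mem_iUnion] at hmem
      obtain ⟨k, _, hk⟩ := hmem
      rcases hk with h | h
      · exact hy1 k h.symm
      · exact hpD (h ▸ hd k)
    have hG : ∀ h ∈ HH.1, ∃ V : Set X, IsOpen V ∧ h ∈ V ∧ V ∩ D ⊆ {h} := by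
      intro h hh
      by_cases hhD : h ∈ D
      · obtain ⟨V, h1, h2, h3⟩ := hdisc h hhD
        exact ⟨V, h1, h2, h3.le⟩
      · exact ⟨Dᶜ, hDc.isOpen_compl, hhD, by simp⟩
    choose! V hVo hVmem hVD using hG
    set G : Set X := ⋃ h ∈ HH.1, V h with hGdef
    have hGopen : IsOpen G := isOpen_biUnion (fun h hh => hVo h hh)
    have hHG : HH.1 ⊆ G := fun h hh => mem_biUnion hh (hVmem h hh)
    have hGD : G ∩ D ⊆ HH.1 := by
      rintro z ⟨hzG, hzD⟩
      obtain ⟨h, hh, hz⟩ := mem_iUnion₂.1 hzG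
      have := hVD h hh ⟨hz, hzD⟩
      rwa [mem_singleton_iff.1 this]
    set N : Set (VietorisHyper X (Fn X n)) :=
      {C | C.1 ⊆ G ∧ (C.1 ∩ Badᶜ).Nonempty} with hN
    have hNopen : IsOpen N := (isOpen_hyperPlus hGopen).inter
      (isOpen_hyperMinus hBadfin.isClosed.isOpen_compl)
    have hHN : HH ∈ N := ⟨hHG, ⟨p, hHH, hpBad⟩⟩
    have hAN : ∀ k, A k ∉ N := by
      intro k hk
      by_cases hkJ : k ∈ J
      · obtain ⟨w, hw1, hw2⟩ := hk.2
        apply hw2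
        exact mem_biUnion hkJ hw1
      · apply hkJ
        have hdk : d k ∈ G := hk.1 (by simp [hA])
        exact hGD ⟨hdk, hd k⟩
    intro hcl
    obtain ⟨C, hC1, k, rfl⟩ := mem_closure_iff.1 hcl N hNopen hHN
    exact hAN k hC1
  obtain ⟨k, hk⟩ := hB2 (closure (Set.range A))ᶜ isClosed_closure.isOpen_compl
    (fun HH hHH => hclos HH hHH)
  exact hk (hy3 k) (subset_closure ⟨k, rfl⟩)

end C

/-- The star of a point with respect to a family of sets. -/
def starOf {X : Type u} (x : X) (𝒰 : Set (Set X)) : Set X := ⋃₀ {V ∈ 𝒰 | x ∈ V}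

section D
variable {X : Type u} [TopologicalSpace X] [T1Space X]

/-- Countable compactness: every sequence has a cluster point. -/
lemma exists_mapClusterPt {n : ℕ} (hn : 2 ≤ n)
    (hD1 : IsD1Space (VietorisHyper X (Fn X n)))
    {p : X} (hp : ∀ U : Set X, IsOpen U → p ∈ U → ∃ y, y ∈ U ∧ y ≠ p)
    (u : ℕ → X) : ∃ z : X, MapClusterPt z atTop u := by
  classical
  by_contra hno
  push_neg at hno
  have hV : ∀ z : X, ∃ V : Set X, IsOpen V ∧ z ∈ V ∧ {k | u k ∈ V}.Finite := by
    intro z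
    have := hno z
    rw [mapClusterPt_iff_frequently] at this
    push_neg at this
    obtain ⟨s, hs, hfreq⟩ := this
    obtain ⟨N, hN⟩ := eventually_atTop.1 hfreq
    refine ⟨interior s, isOpen_interior, mem_interior_iff_mem_nhds.2 hs, ?_⟩
    refine Set.Finite.subset (Set.finite_Iio N) ?_
    intro k hk
    by_contra hkN
    exact hN k (le_of_not_gt hkN) (interior_subset hk)
  choose V hVo hVz hVfin using hV
  -- the range of u is infinite
  have hrange : (Set.range u).Infinite := by
    intro hfin
    have huniv : (Set.univ : Set ℕ).Finite := by
      have : (Set.univ : Set ℕ) ⊆ ⋃ w ∈ Set.range u, {k | u k ∈ V w} := by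
        intro k _
        exact mem_biUnion (mem_range_self k) (hVz (u k))
      exact Set.Finite.subset (hfin.biUnion (fun w _ => hVfin w)) this
    exact Set.infinite_univ huniv
  -- each point has a neighborhood meeting the range in at most itself
  have hsep : ∀ z : X, ∃ W : Set X, IsOpen W ∧ z ∈ W ∧ W ∩ Set.range u ⊆ {z} := by
    intro z
    refine ⟨V z \ ((V z ∩ Set.range u) \ {z}), ?_, ⟨hVz z, fun h => h.2 rfl⟩, ?_⟩
    · apply (hVo z).sdiff
      apply Set.Finite.isClosed
      apply Set.Finite.subset (Set.Finite.image u (hVfin z))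
      rintro w ⟨⟨hw1, ⟨k, rfl⟩⟩, _⟩
      exact ⟨k, hw1, rfl⟩
    · rintro w ⟨⟨hw1, hw2⟩, hw3⟩
      by_contra hwz
      exact hw2 ⟨⟨hw1, hw3⟩, hwz⟩
  choose W hWo hWz hWr using hsep
  set D : Set X := Set.range u \ {p} with hD
  have hDc : IsClosed D := by
    rw [← isOpen_compl_iff, isOpen_iff_forall_mem_open]
    intro z hz
    refine ⟨W z, ?_, hWo z, hWz z⟩
    intro w hw hwD
    have hwz := hWr z ⟨hw, hwD.1⟩
    rw [mem_singleton_iff] at hwz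
    exact hz (hwz ▸ hwD)
  have hpD : p ∉ D := fun h => h.2 rfl
  have hdisc : ∀ x ∈ D, ∃ Vx : Set X, IsOpen Vx ∧ x ∈ Vx ∧ Vx ∩ D = {x} := by
    intro x hx
    refine ⟨W x, hWo x, hWz x, ?_⟩
    apply Set.Subset.antisymm
    · intro w hw
      exact hWr x ⟨hw.1, hw.2.1⟩
    · intro w hw
      have hwx : w = x := hw
      subst hwx
      exact ⟨hWz w, hx⟩
  have hDinf : D.Infinite := hrange.diff (Set.finite_singleton p)
  let e := hDinf.natEmbedding
  exact no_escaping_discrete hn hD1 hp hDc hpD hdisc (fun k => (e k).1)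
    (fun a b hab => e.injective (Subtype.ext hab)) (fun k => (e k).2)

end D

lemma starOf_mono {X : Type u} {x : X} {𝒰 𝒰' : Set (Set X)} (h : 𝒰' ⊆ 𝒰) :
    starOf x 𝒰' ⊆ starOf x 𝒰 :=
  sUnion_subset_sUnion (fun V hV => ⟨h hV.1, hV.2⟩)

lemma mem_starOf {X : Type u} {x z : X} {𝒰 : Set (Set X)} :
    z ∈ starOf x 𝒰 ↔ ∃ V ∈ 𝒰, x ∈ V ∧ z ∈ V := by
  simp only [starOf, mem_sUnion, mem_sep_iff]
  tauto

section E
variable {X : Type u} [TopologicalSpace X] [T1Space X] [RegularSpace X]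

lemma exists_good_covers {n : ℕ} (hn : 2 ≤ n)
    (hD1 : IsD1Space (VietorisHyper X (Fn X n))) (x0 : X) :
    ∃ 𝒱 : ℕ → Set (Set X),
      (∀ m, ∀ V ∈ 𝒱 m, IsOpen V) ∧
      (∀ m, ∀ x : X, ∃ V ∈ 𝒱 m, x ∈ V) ∧
      (∀ j m, j ≤ m → 𝒱 m ⊆ 𝒱 j) ∧
      (∀ x y : X, x ≠ y →
        ∃ m, ∃ Oy : Set X, IsOpen Oy ∧ y ∈ Oy ∧ Oy ∩ starOf x (𝒱 m) = ∅) := by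
  classical
  set F1 : Set (VietorisHyper X (Fn X n)) := {A | ∃ w : X, A.1 = {w}} with hF1
  have hF1ne : F1.Nonempty := ⟨⟨{x0, x0}, pair_mem_Fn hn x0 x0⟩, ⟨x0, Set.pair_eq_singleton x0⟩⟩
  have hF1cl : IsClosed F1 := by
    rw [← isOpen_compl_iff, isOpen_iff_forall_mem_open]
    intro A hA
    obtain ⟨a, ha⟩ := A.2.1
    have hex : ∃ b ∈ A.1, b ≠ a := by
      by_contra hno
      push_neg at hno
      exact hA ⟨a, Set.Subset.antisymm (fun w hw => hno w hw) (fun w hw => hw ▸ ha)⟩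
    obtain ⟨b, hb, hba⟩ := hex
    obtain ⟨Ua, Ub, hUa, hUb, haU, hbU, hdisj⟩ := t2_separation hba.symm
    refine ⟨{C : VietorisHyper X (Fn X n) | (C.1 ∩ Ua).Nonempty} ∩
      {C | (C.1 ∩ Ub).Nonempty}, ?_, ?_, ⟨⟨a, ha, haU⟩, ⟨b, hb, hbU⟩⟩⟩
    · rintro C ⟨⟨c, hc, hcU⟩, ⟨c', hc', hcU'⟩⟩ ⟨w, hw⟩
      rw [hw] at hc hc'
      rw [mem_singleton_iff] at hc hc'
      subst hc; subst hc'
      exact hdisj.ne_of_mem hcU hcU' rfl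
    · exact (isOpen_hyperMinus hUa).inter (isOpen_hyperMinus hUb)
  obtain ⟨B, hB1, hB2⟩ := hD1 F1 hF1ne hF1cl
  have hsingle : ∀ (j : ℕ) (x : X),
      (⟨{x, x}, pair_mem_Fn hn x x⟩ : VietorisHyper X (Fn X n)) ∈ B j :=
    fun j x => (hB1 j).2 ⟨x, Set.pair_eq_singleton x⟩
  have hPO : ∀ (j : ℕ) (x : X), ∃ P O : Set X, IsOpen P ∧ IsOpen O ∧ x ∈ P ∧ x ∈ O ∧
      ∀ y z : X, y ∈ P → z ∈ O → ∀ (h : ({y, z} : Set X) ∈ Fn X n),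
        (⟨{y, z}, h⟩ : VietorisHyper X (Fn X n)) ∈ B j :=
    fun j x => pair_nbhd (hB1 j).1 (hsingle j x) rfl
  choose P O hPo hOo hxP hxO hPOmem using hPO
  refine ⟨fun m => {V | IsOpen V ∧ ∀ j ≤ m, ∀ y ∈ V, ∀ z ∈ V,
      (⟨{y, z}, pair_mem_Fn hn y z⟩ : VietorisHyper X (Fn X n)) ∈ B j}, ?_, ?_, ?_, ?_⟩
  · exact fun m V hV => hV.1
  · intro m x
    refine ⟨⋂ j ∈ Finset.range (m + 1), (P j x ∩ O j x), ⟨?_, ?_⟩, ?_⟩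
    · exact isOpen_biInter_finset (fun j _ => (hPo j x).inter (hOo j x))
    · intro j hj y hy z hz
      have hjm : j ∈ Finset.range (m + 1) := Finset.mem_range.2 (Nat.lt_succ_of_le hj)
      have hy' := mem_iInter₂.1 hy j hjm
      have hz' := mem_iInter₂.1 hz j hjm
      exact hPOmem j x y z hy'.1 hz'.2 _
    · exact mem_iInter₂.2 fun j _ => ⟨hxP j x, hxO j x⟩
  · intro j m hjm V hV
    exact ⟨hV.1, fun i hi => hV.2 i (hi.trans hjm)⟩
  · intro x y hxy
    obtain ⟨u, v, hu, hv, hxu, hyv, hdisj⟩ := t2_separation hxy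
    obtain ⟨Cx, hCxn, hCxc, hCxu⟩ := exists_mem_nhds_isClosed_subset (hu.mem_nhds hxu)
    obtain ⟨Cy, hCyn, hCyc, hCyv⟩ := exists_mem_nhds_isClosed_subset (hv.mem_nhds hyv)
    set W : Set (VietorisHyper X (Fn X n)) :=
      {A | A.1 ⊆ Cxᶜ} ∪ {A | A.1 ⊆ Cyᶜ} with hW
    have hWopen : IsOpen W :=
      (isOpen_hyperPlus hCxc.isOpen_compl).union (isOpen_hyperPlus hCyc.isOpen_compl)
    have hF1W : F1 ⊆ W := by
      rintro A ⟨w, hw⟩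
      by_cases hwc : w ∈ Cx
      · right
        intro z hz
        rw [hw, mem_singleton_iff] at hz
        subst hz
        exact fun hzy => hdisj.ne_of_mem (hCxu hwc) (hCyv hzy) rfl
      · left
        intro z hz
        rw [hw, mem_singleton_iff] at hz
        subst hz
        exact hwc
    obtain ⟨k, hk⟩ := hB2 W hWopen hF1W
    refine ⟨k, interior Cy, isOpen_interior, mem_interior_iff_mem_nhds.2 hCyn, ?_⟩
    rw [Set.eq_empty_iff_forall_notMem]
    rintro z ⟨hz1, hz2⟩
    obtain ⟨V, hV, hxV, hzV⟩ := mem_starOf.1 hz2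
    have hmem := hV.2 k le_rfl x hxV z hzV
    rcases hk hmem with h | h
    · exact h (by simp) (mem_of_mem_nhds hCxn)
    · exact h (by simp) (interior_subset hz1)

lemma star_nbhd_base {𝒱 : ℕ → Set (Set X)}
    (hmono : ∀ j m, j ≤ m → 𝒱 m ⊆ 𝒱 j)
    (hsep : ∀ x y : X, x ≠ y →
      ∃ m, ∃ Oy : Set X, IsOpen Oy ∧ y ∈ Oy ∧ Oy ∩ starOf x (𝒱 m) = ∅)
    (hCC : ∀ u : ℕ → X, ∃ z, MapClusterPt z atTop u)
    {x : X} {U : Set X} (hU : IsOpen U) (hx : x ∈ U) : ∃ m, starOf x (𝒱 m) ⊆ U := by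
  by_contra h
  push_neg at h
  have hy : ∀ m, ∃ y, y ∈ starOf x (𝒱 m) ∧ y ∉ U := fun m => not_subset.1 (h m)
  choose yy hy1 hy2 using hy
  obtain ⟨z, hz⟩ := hCC yy
  have hzU : z ∉ U := by
    intro hzU
    obtain ⟨m, _, hm⟩ := frequently_atTop.1 (mapClusterPt_iff_frequently.1 hz U (hU.mem_nhds hzU)) 0
    exact hy2 m hm
  have hzx : z = x := by
    by_contra hne
    obtain ⟨m, Oy, hOo, hzO, hdisj⟩ := hsep x z (Ne.symm hne)
    obtain ⟨m', hm', hym'⟩ := frequently_atTop.1 (mapClusterPt_iff_frequently.1 hz Oy (hOo.mem_nhds hzO)) m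
    have hmem : yy m' ∈ starOf x (𝒱 m) := starOf_mono (hmono m m' hm') (hy1 m')
    rw [Set.eq_empty_iff_forall_notMem] at hdisj
    exact hdisj (yy m') ⟨hym', hmem⟩
  exact hzU (hzx ▸ hx)

lemma compactSpace_of_covers {𝒱 : ℕ → Set (Set X)}
    (hop : ∀ m, ∀ V ∈ 𝒱 m, IsOpen V)
    (hcov : ∀ m, ∀ x : X, ∃ V ∈ 𝒱 m, x ∈ V)
    (hbase : ∀ (x : X) (U : Set X), IsOpen U → x ∈ U → ∃ m, starOf x (𝒱 m) ⊆ U)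
    (hCC : ∀ u : ℕ → X, ∃ z, MapClusterPt z atTop u) : CompactSpace X := by
  rw [← isCompact_univ_iff]
  apply isCompact_of_finite_subcover
  intro ι Uc hUo hUcov
  classical
  by_cases hXe : IsEmpty X
  · exact ⟨∅, fun x _ => (hXe.false x).elim⟩
  rw [not_isEmpty_iff] at hXe
  set r : ι → ι → Prop := WellOrderingRel with hr
  have wf : WellFounded r := (IsWellFounded.wf : WellFounded (WellOrderingRel : ι → ι → Prop))
  have hSne : ∀ x : X, {i | x ∈ Uc i}.Nonempty := by
    intro x
    obtain ⟨i, hi⟩ := mem_iUnion.1 (hUcov (mem_univ x))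
    exact ⟨i, hi⟩
  set α : X → ι := fun x => wf.min {i | x ∈ Uc i} (hSne x) with hα
  have hαmem : ∀ x, x ∈ Uc (α x) := fun x => wf.min_mem _ (hSne x)
  have hαmin : ∀ x i, x ∈ Uc i → ¬ r i (α x) := fun x i hi => wf.not_lt_min _ hi
  have hmm : ∀ x : X, ∃ m, starOf x (𝒱 m) ⊆ Uc (α x) :=
    fun x => hbase x (Uc (α x)) (hUo _) (hαmem x)
  choose mm hmmspec using hmm
  have key : ∀ m (V : Set X), V ∈ 𝒱 m → ∀ x1 x2 : X, x1 ∈ V → x2 ∈ V →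
      mm x1 = m → mm x2 = m → α x1 = α x2 := by
    intro m V hV x1 x2 h1 h2 hm1 hm2
    by_contra hne
    have hs1 : x2 ∈ Uc (α x1) := by
      apply hmmspec x1
      rw [hm1]
      exact mem_starOf.2 ⟨V, hV, h1, h2⟩
    have hs2 : x1 ∈ Uc (α x2) := by
      apply hmmspec x2
      rw [hm2]
      exact mem_starOf.2 ⟨V, hV, h2, h1⟩
    rcases trichotomous_of r (α x1) (α x2) with h | h | h
    · exact hαmin x2 (α x1) hs1 h
    · exact hne h
    · exact hαmin x1 (α x2) hs2 h
  have hSfin : ∀ m : ℕ, (α '' {x | mm x = m}).Finite := by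
    intro m
    rw [← Set.not_infinite]
    intro hinf
    set e := hinf.natEmbedding with he
    have hxs : ∀ t : ℕ, ∃ x : X, mm x = m ∧ α x = (e t).1 := by
      intro t
      obtain ⟨x, hx1, hx2⟩ := (e t).2
      exact ⟨x, hx1, hx2⟩
    choose xs hxs1 hxs2 using hxs
    obtain ⟨z, hz⟩ := hCC xs
    obtain ⟨V, hV, hzV⟩ := hcov m z
    obtain ⟨t1, _, ht1⟩ := frequently_atTop.1
      (mapClusterPt_iff_frequently.1 hz V ((hop m V hV).mem_nhds hzV)) 0
    obtain ⟨t2, ht2t, ht2⟩ := frequently_atTop.1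
      (mapClusterPt_iff_frequently.1 hz V ((hop m V hV).mem_nhds hzV)) (t1 + 1)
    have heq : α (xs t1) = α (xs t2) := key m V hV _ _ ht1 ht2 (hxs1 t1) (hxs1 t2)
    rw [hxs2 t1, hxs2 t2] at heq
    have : (e t1) = (e t2) := Subtype.ext heq
    have ht12 : t1 = t2 := e.injective this
    omega
  set C : Set ι := ⋃ m, α '' {x | mm x = m} with hC
  have hCct : C.Countable := countable_iUnion (fun m => (hSfin m).countable)
  have hCne : C.Nonempty := by
    obtain ⟨x0⟩ := hXe
    exact ⟨α x0, mem_iUnion.2 ⟨mm x0, ⟨x0, rfl, rfl⟩⟩⟩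
  obtain ⟨g, hg⟩ := hCct.exists_eq_range hCne
  by_cases hfin : ∃ t : ℕ, (Set.univ : Set X) ⊆ ⋃ s ∈ Finset.range (t + 1), Uc (g s)
  · obtain ⟨t, ht⟩ := hfin
    refine ⟨(Finset.range (t + 1)).image g, ?_⟩
    intro x hx
    obtain ⟨s, hs, hxs⟩ := mem_iUnion₂.1 (ht hx)
    exact mem_iUnion₂.2 ⟨g s, Finset.mem_image_of_mem g hs, hxs⟩
  · exfalso
    push_neg at hfin
    have hxs : ∀ t : ℕ, ∃ x : X, x ∉ ⋃ s ∈ Finset.range (t + 1), Uc (g s) := by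
      intro t
      obtain ⟨x, _, hx⟩ := not_subset.1 (hfin t)
      exact ⟨x, hx⟩
    choose xs hxs using hxs
    obtain ⟨z, hz⟩ := hCC xs
    have hzC : α z ∈ C := mem_iUnion.2 ⟨mm z, ⟨z, rfl, rfl⟩⟩
    rw [hg] at hzC
    obtain ⟨t0, ht0⟩ := hzC
    obtain ⟨t, htt, ht⟩ := frequently_atTop.1
      (mapClusterPt_iff_frequently.1 hz (Uc (α z)) ((hUo _).mem_nhds (hαmem z))) t0
    apply hxs t
    apply mem_iUnion₂.2
    refine ⟨t0, Finset.mem_range.2 (by omega), ?_⟩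
    rw [ht0]
    exact ht

lemma secondCountable_of_covers [CompactSpace X] {𝒱 : ℕ → Set (Set X)}
    (hop : ∀ m, ∀ V ∈ 𝒱 m, IsOpen V)
    (hcov : ∀ m, ∀ x : X, ∃ V ∈ 𝒱 m, x ∈ V)
    (hsep : ∀ x y : X, x ≠ y →
      ∃ m, ∃ Oy : Set X, IsOpen Oy ∧ y ∈ Oy ∧ Oy ∩ starOf x (𝒱 m) = ∅) :
    SecondCountableTopology X := by
  classical
  have hD : ∀ m : ℕ, ∃ D : Set (Set X), D.Finite ∧ D ⊆ 𝒱 m ∧ ∀ x : X, ∃ V ∈ D, x ∈ V := by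
    intro m
    have hcover : (Set.univ : Set X) ⊆ ⋃ V : {V // V ∈ 𝒱 m}, V.1 := by
      intro x _
      obtain ⟨V, hV, hxV⟩ := hcov m x
      exact mem_iUnion.2 ⟨⟨V, hV⟩, hxV⟩
    obtain ⟨t, ht⟩ := isCompact_univ.elim_finite_subcover (fun V : {V // V ∈ 𝒱 m} => V.1)
      (fun V => hop m V.1 V.2) hcover
    refine ⟨(fun V : {V // V ∈ 𝒱 m} => V.1) '' ↑t, t.finite_toSet.image _, ?_, ?_⟩
    · rintro V ⟨W, _, rfl⟩
      exact W.2
    · intro x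
      obtain ⟨V, hVt, hxV⟩ := mem_iUnion₂.1 (ht (mem_univ x))
      exact ⟨V.1, ⟨V, hVt, rfl⟩, hxV⟩
  choose D hDfin hDsub hDcov using hD
  set 𝒞 : Set (Set X) := ⋃ m, (fun V => (closure V)ᶜ) '' D m with h𝒞
  have h𝒞ct : 𝒞.Countable := countable_iUnion (fun m => ((hDfin m).image _).countable)
  set ℬ : Set (Set X) := (fun s => ⋂₀ s) '' {s | s.Finite ∧ s ⊆ 𝒞} with hℬ
  have hℬct : ℬ.Countable := (countable_setOf_finite_subset h𝒞ct).image _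
  have h𝒞open : ∀ s ∈ 𝒞, IsOpen s := by
    rintro s hs
    obtain ⟨m, hm⟩ := mem_iUnion.1 hs
    obtain ⟨V, _, rfl⟩ := hm
    exact isClosed_closure.isOpen_compl
  have hbasis : TopologicalSpace.IsTopologicalBasis ℬ := by
    apply isTopologicalBasis_of_isOpen_of_nhds
    · rintro u ⟨s, ⟨hsfin, hssub⟩, rfl⟩
      exact Set.Finite.isOpen_sInter hsfin (fun t ht => h𝒞open t (hssub ht))
    · intro a u hau hu
      have hyV : ∀ y : {y : X // y ∈ uᶜ}, ∃ m, ∃ V ∈ D m, y.1 ∈ V ∧ a ∉ closure V := by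
        rintro ⟨y, hy⟩
        have hya : y ≠ a := fun h => hy (h ▸ hau)
        obtain ⟨m, Oa, hOo, haO, hdisj⟩ := hsep y a hya
        obtain ⟨V, hVD, hyV⟩ := hDcov m y
        refine ⟨m, V, hVD, hyV, ?_⟩
        have hVOa : Oa ∩ V = ∅ := by
          rw [Set.eq_empty_iff_forall_notMem]
          rintro w ⟨hw1, hw2⟩
          rw [Set.eq_empty_iff_forall_notMem] at hdisj
          exact hdisj w ⟨hw1, mem_starOf.2 ⟨V, hDsub m hVD, hyV, hw2⟩⟩
        intro hacl
        obtain ⟨w, hw1, hw2⟩ := mem_closure_iff.1 hacl Oa hOo haO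
        rw [Set.eq_empty_iff_forall_notMem] at hVOa
        exact hVOa w ⟨hw1, hw2⟩
      choose mY VY hVYD hYV haVY using hyV
      have hucompl : IsCompact uᶜ := hu.isClosed_compl.isCompact
      have hcover : uᶜ ⊆ ⋃ y : {y : X // y ∈ uᶜ}, VY y := by
        intro y hy
        exact mem_iUnion.2 ⟨⟨y, hy⟩, hYV ⟨y, hy⟩⟩
      obtain ⟨t, ht⟩ := hucompl.elim_finite_subcover VY
        (fun y => hop _ _ (hDsub _ (hVYD y))) hcover
      refine ⟨⋂ y ∈ t, (closure (VY y))ᶜ, ?_, ?_, ?_⟩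
      · rw [hℬ]
        refine ⟨(fun y : {y : X // y ∈ uᶜ} => (closure (VY y))ᶜ) '' ↑t,
          ⟨t.finite_toSet.image _, ?_⟩, ?_⟩
        · rintro s ⟨y, _, rfl⟩
          exact mem_iUnion.2 ⟨mY y, ⟨VY y, hVYD y, rfl⟩⟩
        · simp [Set.sInter_image]
      · exact mem_iInter₂.2 fun y _ => haVY y
      · intro z hz
        by_contra hzu
        obtain ⟨y, hyt, hzy⟩ := mem_iUnion₂.1 (ht hzu)
        exact (mem_iInter₂.1 hz y hyt) (subset_closure hzy)
  exact hbasis.secondCountableTopology hℬct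

end E

section Transfer
variable {X : Type u} [TopologicalSpace X]

/-- D1 transfers to a closed subfamily of a hyperspace. -/
lemma IsD1Space.subfamily {S T : Set (Set X)} (hST : S ⊆ T)
    (hcl : IsClosed {A : VietorisHyper X T | A.1 ∈ S})
    (h : IsD1Space (VietorisHyper X T)) : IsD1Space (VietorisHyper X S) := by
  intro F hFne hFcl
  set ι : VietorisHyper X S → VietorisHyper X T := fun A => ⟨A.1, hST A.2⟩ with hι
  obtain ⟨t, ht, hteq⟩ := isOpen_hyper_iff.1 hFcl.isOpen_compl
  set F' : Set (VietorisHyper X T) := ι '' F with hF'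
  have hmemF : ∀ (A : Set X) (hA : A ∈ S) (hA' : A ∈ T),
      ((⟨A, hA'⟩ : VietorisHyper X T) ∈ F') ↔ (⟨A, hA⟩ : VietorisHyper X S) ∈ F := by
    intro A hA hA'
    constructor
    · rintro ⟨B, hB, hBe⟩
      have : B.1 = A := congrArg Subtype.val hBe
      have hBA : B = ⟨A, hA⟩ := Subtype.ext this
      exact hBA ▸ hB
    · intro hAF
      exact ⟨⟨A, hA⟩, hAF, rfl⟩
  have hF'compl : F'ᶜ = (Subtype.val ⁻¹' t) ∪ {A : VietorisHyper X T | A.1 ∉ S} := by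
    ext A
    constructor
    · intro hA
      by_cases hAS : A.1 ∈ S
      · left
        have : (⟨A.1, hAS⟩ : VietorisHyper X S) ∉ F := by
          intro hc
          exact hA ((hmemF A.1 hAS (hST hAS)).2 hc)
        have : (⟨A.1, hAS⟩ : VietorisHyper X S) ∈ Subtype.val ⁻¹' t := by
          rw [hteq]; exact this
        exact this
      · right; exact hAS
    · rintro (hA | hA) hc
      · obtain ⟨B, hB, rfl⟩ := hc
        have : B ∈ Subtype.val ⁻¹' t := hA
        rw [hteq] at this
        exact this hB
      · obtain ⟨B, _, rfl⟩ := hc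
        exact hA (B.2)
  have hF'cl : IsClosed F' := by
    rw [← isOpen_compl_iff, hF'compl]
    exact IsOpen.union (isOpen_hyper_iff.2 ⟨t, ht, rfl⟩) hcl.isOpen_compl
  have hF'ne : F'.Nonempty := hFne.image ι
  obtain ⟨B, hB1, hB2⟩ := h F' hF'ne hF'cl
  refine ⟨fun k => ι ⁻¹' (B k), ?_, ?_⟩
  · intro k
    obtain ⟨tk, htk, htkeq⟩ := isOpen_hyper_iff.1 (hB1 k).1
    constructor
    · refine isOpen_hyper_iff.2 ⟨tk, htk, ?_⟩
      ext A
      have : (ι A ∈ Subtype.val ⁻¹' tk) ↔ ι A ∈ B k := by rw [htkeq]; exact Iff.rfl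
      exact this
    · intro A hA
      exact (hB1 k).2 ⟨A, hA, rfl⟩
  · intro V hV hFV
    obtain ⟨tv, htv, htveq⟩ := isOpen_hyper_iff.1 hV
    set V' : Set (VietorisHyper X T) := (Subtype.val ⁻¹' tv) ∪ {A | A.1 ∉ S} with hV'
    have hV'open : IsOpen V' :=
      IsOpen.union (isOpen_hyper_iff.2 ⟨tv, htv, rfl⟩) hcl.isOpen_compl
    have hFV' : F' ⊆ V' := by
      rintro A ⟨C, hC, rfl⟩
      left
      have : C ∈ Subtype.val ⁻¹' tv := by rw [htveq]; exact hFV hC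
      exact this
    obtain ⟨k, hk⟩ := hB2 V' hV'open hFV'
    refine ⟨k, ?_⟩
    intro A hA
    rcases hk hA with h1 | h1
    · rw [← htveq]
      exact h1
    · exact absurd A.2 h1
end Transfer

section Discrete
variable {X : Type u} [TopologicalSpace X]

lemma discrete_D1 [DiscreteTopology X] : IsD1Space (VietorisHyper X (Kcal X)) := by
  have hsingle : ∀ A : VietorisHyper X (Kcal X), IsOpen ({A} : Set (VietorisHyper X (Kcal X))) := by
    intro A
    have hfin : A.1.Finite := isCompact_iff_finite.1 A.2.2
    have : ({A} : Set (VietorisHyper X (Kcal X))) =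
        {C : VietorisHyper X (Kcal X) | C.1 ⊆ A.1} ∩
        ⋂ a ∈ A.1, {C : VietorisHyper X (Kcal X) | (C.1 ∩ {a}).Nonempty} := by
      ext C
      simp only [mem_singleton_iff, mem_inter_iff, mem_iInter, mem_setOf_eq]
      constructor
      · rintro rfl
        exact ⟨Subset.rfl, fun a ha => ⟨a, ha, rfl⟩⟩
      · rintro ⟨h1, h2⟩
        apply Subtype.ext
        apply Set.Subset.antisymm h1
        intro a ha
        obtain ⟨b, hb1, hb2⟩ := h2 a ha
        rw [mem_singleton_iff] at hb2
        exact hb2 ▸ hb1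
    rw [this]
    exact (isOpen_hyperPlus (isOpen_discrete _)).inter
      (Set.Finite.isOpen_biInter hfin (fun a _ => isOpen_hyperMinus (isOpen_discrete _)))
  intro F hFne _
  refine ⟨fun _ => F, fun _ => ⟨?_, Subset.rfl⟩, fun V _ hFV => ⟨0, hFV⟩⟩
  have : F = ⋃ A ∈ F, ({A} : Set (VietorisHyper X (Kcal X))) := by simp
  rw [this]
  exact isOpen_biUnion (fun A _ => hsingle A)

end Discrete

section Metrizable
variable {X : Type u} [MetricSpace X] [CompactSpace X]

/-- With `X` compact metric, the natural map to `NonemptyCompacts X` takes open sets of the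
Vietoris hyperspace topology to metrically open conditions. -/
lemma vietoris_open_metric {t : Set (Set X)} (ht : (vietorisTopology X).IsOpen t) :
    IsOpen {K : TopologicalSpace.NonemptyCompacts X | (K : Set X) ∈ t} := by
  induction ht with
  | basic s hs =>
    rcases hs with ⟨U, hU, rfl⟩ | ⟨U, hU, rfl⟩
    · rw [Metric.isOpen_iff]
      intro K hK
      obtain ⟨δ, hδ, hthick⟩ := K.isCompact.exists_thickening_subset_open hU hK
      refine ⟨δ, hδ, ?_⟩
      intro C hC
      rw [mem_ball, Metric.NonemptyCompacts.dist_eq] at hC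
      intro x hx
      obtain ⟨y, hy, hxy⟩ := Metric.exists_dist_lt_of_hausdorffDist_lt hx hC
        (Metric.hausdorffEdist_ne_top_of_nonempty_of_bounded C.nonempty K.nonempty
          C.isCompact.isBounded K.isCompact.isBounded)
      exact hthick (Metric.mem_thickening_iff.2 ⟨y, hy, hxy⟩)
    · rw [Metric.isOpen_iff]
      rintro K ⟨a, haK, haU⟩
      obtain ⟨δ, hδ, hball⟩ := Metric.isOpen_iff.1 hU a haU
      refine ⟨δ, hδ, ?_⟩
      intro C hC
      rw [mem_ball, Metric.NonemptyCompacts.dist_eq, Metric.hausdorffDist_comm] at hC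
      obtain ⟨y, hy, hxy⟩ := Metric.exists_dist_lt_of_hausdorffDist_lt haK hC
        (Metric.hausdorffEdist_ne_top_of_nonempty_of_bounded K.nonempty C.nonempty
          K.isCompact.isBounded C.isCompact.isBounded)
      exact ⟨y, hy, hball (by rwa [mem_ball, dist_comm])⟩
  | univ => exact isOpen_univ
  | inter s₁ s₂ _ _ ih₁ ih₂ => exact ih₁.inter ih₂
  | sUnion S _ ih =>
    have : {K : TopologicalSpace.NonemptyCompacts X | (K : Set X) ∈ ⋃₀ S} =
        ⋃ s ∈ S, {K : TopologicalSpace.NonemptyCompacts X | (K : Set X) ∈ s} := by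
      ext K; simp
    rw [this]
    exact isOpen_biUnion ih

/-- Any Hausdorff-metric ball around `A` contains a Vietoris neighborhood of `A`. -/
lemma vietoris_nbhd_in_ball (A : VietorisHyper X (Kcal X)) {ε : ℝ} (hε : 0 < ε) :
    ∃ N : Set (VietorisHyper X (Kcal X)), IsOpen N ∧ A ∈ N ∧
      ∀ C ∈ N, Metric.hausdorffDist C.1 A.1 < ε := by
  classical
  have hcov : A.1 ⊆ ⋃ a : A.1, Metric.ball a.1 (ε/4) := by
    intro x hx
    exact mem_iUnion.2 ⟨⟨x, hx⟩, Metric.mem_ball_self (by linarith)⟩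
  obtain ⟨tt, htt⟩ := A.2.2.elim_finite_subcover (fun a : A.1 => Metric.ball a.1 (ε/4))
    (fun a => Metric.isOpen_ball) hcov
  set N : Set (VietorisHyper X (Kcal X)) :=
    {C | C.1 ⊆ Metric.thickening (ε/4) A.1} ∩
    ⋂ a ∈ tt, {C : VietorisHyper X (Kcal X) | (C.1 ∩ Metric.ball a.1 (ε/4)).Nonempty} with hN
  refine ⟨N, ?_, ⟨?_, ?_⟩, ?_⟩
  · exact (isOpen_hyperPlus Metric.isOpen_thickening).inter
      (isOpen_biInter_finset (fun a _ => isOpen_hyperMinus Metric.isOpen_ball))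
  · exact (Metric.self_subset_thickening (by linarith) A.1)
  · exact mem_iInter₂.2 fun a _ => ⟨a.1, a.2, Metric.mem_ball_self (by linarith)⟩
  · rintro C ⟨hC1, hC2⟩
    have hle : Metric.hausdorffDist C.1 A.1 ≤ ε/2 := by
      apply Metric.hausdorffDist_le_of_mem_dist (by linarith)
      · intro x hx
        obtain ⟨z, hz, hdist⟩ := Metric.mem_thickening_iff.1 (hC1 hx)
        exact ⟨z, hz, by linarith⟩
      · intro y hy
        obtain ⟨a, hat, hball⟩ := mem_iUnion₂.1 (htt hy)
        obtain ⟨c, hcC, hcball⟩ := mem_iInter₂.1 hC2 a hat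
        refine ⟨c, hcC, ?_⟩
        have h1 : dist y a.1 < ε/4 := by rwa [Metric.mem_ball] at hball
        have h2 : dist c a.1 < ε/4 := by rwa [Metric.mem_ball] at hcball
        calc dist y c ≤ dist y a.1 + dist a.1 c := dist_triangle _ _ _
        _ = dist y a.1 + dist c a.1 := by rw [dist_comm a.1 c]
        _ ≤ ε/2 := by linarith
    linarith

lemma compact_metric_D1 : IsD1Space (VietorisHyper X (Kcal X)) := by
  classical
  intro F hFne hFcl
  set e : VietorisHyper X (Kcal X) → TopologicalSpace.NonemptyCompacts X :=
    fun A => ⟨⟨A.1, A.2.2⟩, A.2.1⟩ with he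
  set e' : TopologicalSpace.NonemptyCompacts X → VietorisHyper X (Kcal X) :=
    fun K => ⟨(K : Set X), K.nonempty, K.isCompact⟩ with he'
  have hee' : ∀ A, e' (e A) = A := fun A => Subtype.ext rfl
  -- metric-open sets pull back to Vietoris-open sets of the hyperspace
  have hpull : ∀ M : Set (TopologicalSpace.NonemptyCompacts X), IsOpen M →
      IsOpen {A : VietorisHyper X (Kcal X) | e A ∈ M} := by
    intro M hM
    rw [isOpen_iff_forall_mem_open]
    intro A hA
    obtain ⟨ε, hε, hball⟩ := Metric.isOpen_iff.1 hM (e A) hA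
    obtain ⟨N, hNo, hAN, hNd⟩ := vietoris_nbhd_in_ball A hε
    refine ⟨N, ?_, hNo, hAN⟩
    intro C hC
    apply hball
    rw [mem_ball, Metric.NonemptyCompacts.dist_eq]
    exact hNd C hC
  -- Vietoris-open sets pull back to metric-open sets
  have hpush : ∀ s : Set (VietorisHyper X (Kcal X)), IsOpen s →
      IsOpen {K : TopologicalSpace.NonemptyCompacts X | e' K ∈ s} := by
    intro s hs
    obtain ⟨t, ht, hteq⟩ := isOpen_hyper_iff.1 hs
    have : {K : TopologicalSpace.NonemptyCompacts X | e' K ∈ s} =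
        {K : TopologicalSpace.NonemptyCompacts X | (K : Set X) ∈ t} := by
      ext K
      rw [← hteq]
      rfl
    rw [this]
    exact vietoris_open_metric ht
  set F' : Set (TopologicalSpace.NonemptyCompacts X) := {K | e' K ∈ F} with hF'
  have hF'cl : IsClosed F' := by
    rw [← isOpen_compl_iff]
    exact hpush Fᶜ hFcl.isOpen_compl
  have hF'cpt : IsCompact F' := hF'cl.isCompact
  have heF' : ∀ A ∈ F, e A ∈ F' := by
    intro A hA
    show e' (e A) ∈ F
    rw [hee']
    exact hA
  refine ⟨fun m => {A | e A ∈ Metric.thickening (1/(m+1)) F'}, ?_, ?_⟩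
  · intro m
    constructor
    · exact hpull _ Metric.isOpen_thickening
    · intro A hA
      exact Metric.self_subset_thickening (by positivity) F' (heF' A hA)
  · intro V hV hFV
    have hF'V : F' ⊆ {K | e' K ∈ V} := fun K hK => hFV hK
    obtain ⟨δ, hδ, hthick⟩ := hF'cpt.exists_thickening_subset_open (hpush V hV) hF'V
    obtain ⟨m, hm⟩ := exists_nat_one_div_lt hδ
    refine ⟨m, ?_⟩
    intro A hA
    have : e A ∈ Metric.thickening δ F' :=
      Metric.thickening_mono (le_of_lt hm) F' hA
    have : e' (e A) ∈ V := hthick this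
    rwa [hee'] at this

end Metrizable

section FnClosed
variable {X : Type u} [TopologicalSpace X] [T2Space X]

lemma closed_Fn_in_Kcal (n : ℕ) :
    IsClosed {A : VietorisHyper X (Kcal X) | A.1 ∈ Fn X n} := by
  classical
  rw [← isOpen_compl_iff, isOpen_iff_forall_mem_open]
  intro A hA
  have hcard : (n : ℕ∞) + 1 ≤ A.1.encard := by
    have : ¬ (A.1.encard ≤ n) := fun h => hA ⟨A.2.1, h⟩
    exact Order.add_one_le_of_lt (lt_of_not_ge this)
  obtain ⟨T, hTsub, hTcard⟩ := Set.exists_subset_encard_eq hcard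
  have hTfin : T.Finite := Set.finite_of_encard_le_coe (k := n + 1)
    (le_of_eq (by rw [hTcard, Nat.cast_add, Nat.cast_one]))
  have hsep : ∀ x y : X, x ≠ y → ∃ uvp : Set X × Set X, IsOpen uvp.1 ∧ IsOpen uvp.2 ∧
      x ∈ uvp.1 ∧ y ∈ uvp.2 ∧ Disjoint uvp.1 uvp.2 := by
    intro x y h
    obtain ⟨u, v, h1, h2, h3, h4, h5⟩ := t2_separation h
    exact ⟨(u, v), h1, h2, h3, h4, h5⟩
  choose! uvp huv1 huv2 huv3 huv4 huv5 using hsep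
  set U : X → Set X := fun x => ⋂ y ∈ T \ {x}, ((uvp x y).1 ∩ (uvp y x).2) with hU
  have hUopen : ∀ x ∈ T, IsOpen (U x) := by
    intro x _
    apply Set.Finite.isOpen_biInter (hTfin.subset diff_subset)
    rintro y ⟨_, hy⟩
    rw [mem_singleton_iff] at hy
    exact (huv1 x y (fun h => hy (h.symm ▸ rfl))).inter (huv2 y x (Ne.symm (fun h => hy (h ▸ rfl))))
  have hUmem : ∀ x ∈ T, x ∈ U x := by
    intro x _
    apply mem_iInter₂.2
    rintro y ⟨_, hy⟩
    rw [mem_singleton_iff] at hy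
    have hxy : x ≠ y := fun h => hy h.symm
    exact ⟨huv3 x y hxy, huv4 y x hxy.symm⟩
  have hUdisj : ∀ x ∈ T, ∀ x' ∈ T, x ≠ x' → ∀ z, z ∈ U x → z ∈ U x' → False := by
    intro x hx x' hx' hne z hz hz'
    have h1 : z ∈ (uvp x x').1 := (mem_iInter₂.1 hz x' ⟨hx', fun h => hne (mem_singleton_iff.1 h).symm⟩).1
    have h2 : z ∈ (uvp x x').2 := (mem_iInter₂.1 hz' x ⟨hx, fun h => hne (mem_singleton_iff.1 h)⟩).2
    exact (huv5 x x' hne).ne_of_mem h1 h2 rfl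
  refine ⟨⋂ x ∈ T, {C : VietorisHyper X (Kcal X) | (C.1 ∩ U x).Nonempty}, ?_, ?_, ?_⟩
  · intro C hC hCF
    have hc : ∀ x : T, ∃ c, c ∈ C.1 ∩ U x.1 := fun x => mem_iInter₂.1 hC x.1 x.2
    choose c hc using hc
    set f : X → X := fun x => if h : x ∈ T then c ⟨x, h⟩ else x with hf
    have hinj : Set.InjOn f T := by
      intro x hx x' hx' heq
      by_contra hne
      rw [hf] at heq
      simp only [dif_pos hx, dif_pos hx'] at heq
      exact hUdisj x hx x' hx' hne (c ⟨x, hx⟩) (hc ⟨x, hx⟩).2 (heq ▸ (hc ⟨x', hx'⟩).2)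
    have hmaps : Set.MapsTo f T C.1 := by
      intro x hx
      rw [hf]
      simp only [dif_pos hx]
      exact (hc ⟨x, hx⟩).1
    have hle : T.encard ≤ C.1.encard := Set.encard_le_encard_of_injOn hmaps hinj
    rw [hTcard] at hle
    have : C.1.encard ≤ n := hCF.2
    have hfalse : (n : ℕ∞) + 1 ≤ n := le_trans hle this
    exact (by exact_mod_cast Nat.not_succ_le_self n : ¬ ((n : ℕ∞) + 1 ≤ n)) hfalse
  · exact Set.Finite.isOpen_biInter hTfin (fun x hx => isOpen_hyperMinus (hUopen x hx))
  · exact mem_iInter₂.2 fun x hx => ⟨x, hTsub hx, hUmem x hx⟩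

lemma Fn_subset_Kcal (n : ℕ) : Fn X n ⊆ Kcal X := by
  rintro A ⟨h1, h2⟩
  exact ⟨h1, (Set.finite_of_encard_le_coe h2).isCompact⟩

end FnClosed


section Main
variable {X : Type u} [TopologicalSpace X] [T1Space X] [RegularSpace X]

lemma two_implies_three {n : ℕ} (hn : 2 ≤ n)
    (hD1 : IsD1Space (VietorisHyper X (Fn X n))) :
    DiscreteTopology X ∨ (CompactSpace X ∧ TopologicalSpace.MetrizableSpace X) := by
  by_cases hdisc : DiscreteTopology X
  · exact Or.inl hdisc
  right
  have hp : ∃ p : X, ∀ U : Set X, IsOpen U → p ∈ U → ∃ y, y ∈ U ∧ y ≠ p := by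
    by_contra h
    push_neg at h
    apply hdisc
    rw [discreteTopology_iff_isOpen_singleton]
    intro p
    obtain ⟨U, hUo, hpU, hU⟩ := h p
    have : U = {p} := Set.Subset.antisymm (fun y hy => hU y hy) (fun y hy => hy ▸ hpU)
    exact this ▸ hUo
  obtain ⟨p, hp⟩ := hp
  have hCC := exists_mapClusterPt hn hD1 hp
  obtain ⟨𝒱, hop, hcov, hmono, hsep⟩ := exists_good_covers hn hD1 p
  have hbase : ∀ (x : X) (U : Set X), IsOpen U → x ∈ U → ∃ m, starOf x (𝒱 m) ⊆ U :=
    fun x U hU hx => star_nbhd_base hmono hsep hCC hU hx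
  have hcpt : CompactSpace X := compactSpace_of_covers hop hcov hbase hCC
  haveI := hcpt
  haveI : SecondCountableTopology X := secondCountable_of_covers hop hcov hsep
  exact ⟨hcpt, inferInstance⟩

end Main

/-- characterization of spaces whose Vietoris hyperspaces are `D₁`-spaces. -/
theorem statement5 (X : Type u) [TopologicalSpace X] [T1Space X] [RegularSpace X] :
    List.TFAE
      [IsD1Space (VietorisHyper X (Kcal X)),
       ∃ n, 2 ≤ n ∧ IsD1Space (VietorisHyper X (Fn X n)),
       DiscreteTopology X ∨ (CompactSpace X ∧ TopologicalSpace.MetrizableSpace X)] := by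
  tfae_have 1 → 2 := by
    intro h
    exact ⟨2, le_rfl, IsD1Space.subfamily (Fn_subset_Kcal 2) (closed_Fn_in_Kcal 2) h⟩
  tfae_have 2 → 3 := by
    rintro ⟨n, hn, h⟩
    exact two_implies_three hn h
  tfae_have 3 → 1 := by
    rintro (h | ⟨hc, hm⟩)
    · haveI := h
      exact discrete_D1
    · haveI := hc; haveI := hm
      letI : MetricSpace X := TopologicalSpace.metrizableSpaceMetric X
      exact compact_metric_D1
  tfae_finish
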